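/- arXiv:2311.14202 — 7 statements merged into one kernel-verified Lean document; each statement's English description precedes it below -/
import Mathlib

section
/- Suppose the Hamiltonian matrix H = [[F, G],[−K, −Fᴴ]] has a Lagrangian invariant subspace spanned by the columns of [W1; W2] with W1ᴴW1 + W2ᴴW2 = I and W1ᴴW2 = W2ᴴW1, satisfying H·[W1; W2] = [W1; W2]·T11 for some T11 ∈ ℂ^{n×n}. If the pair (F, G) is controllable, then W1 is invertible. -/
open Matrix
open scoped ComplexOrder

/-- A matrix with full column rank has injective `mulVec`. -/
lemma aux_full_col_rank {m : Type*} [Fintype m] {k : ℕ} (M : Matrix m (Fin k) ℂ)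
    (h : M.rank = k) : ∀ v, M *ᵥ v = 0 → v = 0 := by
  intro v hv
  have hker : LinearMap.ker M.mulVecLin = ⊥ := by
    have h1 := LinearMap.finrank_range_add_finrank_ker M.mulVecLin
    rw [Matrix.rank] at h
    rw [h] at h1
    simp only [Module.finrank_fintype_fun_eq_card, Fintype.card_fin] at h1
    have h2 : Module.finrank ℂ (LinearMap.ker M.mulVecLin) = 0 := by omega
    exact Submodule.finrank_eq_zero.mp h2
  have : v ∈ LinearMap.ker M.mulVecLin := by
    simpa [Matrix.mulVecLin_apply] using hv
  rw [hker] at this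
  simpa using this

set_option maxHeartbeats 1000000 in
theorem stmt3 {n : ℕ}
    (F G K : Matrix (Fin n) (Fin n) ℂ)
    (hG : G.PosSemidef) (hK : K.PosSemidef)
    (W1 W2 T11 : Matrix (Fin n) (Fin n) ℂ)
    (H : Matrix (Fin n ⊕ Fin n) (Fin n ⊕ Fin n) ℂ)
    (hH : H = Matrix.fromBlocks F G (-K) (-Fᴴ))
    (hinv : H * Matrix.fromRows W1 W2 = Matrix.fromRows W1 W2 * T11)
    (horth : (Matrix.fromRows W1 W2)ᴴ * Matrix.fromRows W1 W2 = 1)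
    (hlag : W1ᴴ * W2 = W2ᴴ * W1)
    (hctrb : ∀ s : ℂ,
      (Matrix.fromCols (s • (1 : Matrix (Fin n) (Fin n) ℂ) - F) G).rank = n) :
    IsUnit W1 := by
  -- Extract the block equations
  rw [hH, Matrix.fromBlocks_mul_fromRows, Matrix.fromRows_mul] at hinv
  have heq1 : F * W1 + G * W2 = W1 * T11 := congrArg (fun M => Matrix.toRows₁ M) hinv
  have heq2 : (-K) * W1 + (-Fᴴ) * W2 = W2 * T11 := congrArg (fun M => Matrix.toRows₂ M) hinv
  -- Orthonormality: W1ᴴW1 + W2ᴴW2 = 1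
  have horth' : W1ᴴ * W1 + W2ᴴ * W2 = 1 := by
    rwa [Matrix.conjTranspose_fromRows_eq_fromCols_conjTranspose,
      Matrix.fromCols_mul_fromRows] at horth
  -- Key: the kernel of W1 is invariant, and G kills W2 on it
  have hkey : ∀ x : Fin n → ℂ, W1 *ᵥ x = 0 →
      G *ᵥ (W2 *ᵥ x) = 0 ∧ W1 *ᵥ (T11 *ᵥ x) = 0 := by
    intro x hx
    have h1 : G *ᵥ (W2 *ᵥ x) = W1 *ᵥ (T11 *ᵥ x) := by
      have := congrArg (fun M => M *ᵥ x) heq1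
      simp only [Matrix.add_mulVec, ← Matrix.mulVec_mulVec] at this
      rw [hx] at this
      simpa using this
    have h2 : star (W2 *ᵥ x) ⬝ᵥ (G *ᵥ (W2 *ᵥ x)) = 0 := by
      rw [h1]
      have hmat : W2ᴴ * (W1 * T11) = W1ᴴ * (W2 * T11) := by
        rw [← Matrix.mul_assoc, ← hlag, Matrix.mul_assoc]
      have : star (W2 *ᵥ x) ⬝ᵥ (W1 *ᵥ (T11 *ᵥ x))
          = star (W1 *ᵥ x) ⬝ᵥ (W2 *ᵥ (T11 *ᵥ x)) := by
        rw [Matrix.star_mulVec, Matrix.star_mulVec, Matrix.mulVec_mulVec, Matrix.mulVec_mulVec,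
          Matrix.dotProduct_mulVec, Matrix.dotProduct_mulVec, Matrix.vecMul_vecMul,
          Matrix.vecMul_vecMul, hmat]
      rw [this, hx]
      simp
    have hGz : G *ᵥ (W2 *ᵥ x) = 0 := (hG.dotProduct_mulVec_zero_iff _).mp h2
    exact ⟨hGz, by rw [← h1, hGz]⟩
  -- Suppose W1 not invertible
  by_contra hW1
  have hni : ¬ Function.Injective W1.mulVec := fun h => hW1 (Matrix.mulVec_injective_iff_isUnit.mp h)
  have hker : LinearMap.ker W1.mulVecLin ≠ ⊥ := by
    intro h
    exact hni (by
      rw [show W1.mulVec = W1.mulVecLin from rfl]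
      exact LinearMap.ker_eq_bot.mp h)
  -- The kernel is T11-invariant; restrict T11 to it
  set S := LinearMap.ker W1.mulVecLin with hS
  have hinvariant : ∀ x ∈ S, T11.mulVecLin x ∈ S := by
    intro x hx
    have hx0 : W1 *ᵥ x = 0 := hx
    exact (hkey x hx0).2
  let f : Module.End ℂ S := T11.mulVecLin.restrict hinvariant
  have : Nontrivial S := Submodule.nontrivial_iff_ne_bot.mpr hker
  obtain ⟨μ, hμ⟩ := Module.End.exists_eigenvalue f
  obtain ⟨v, hv⟩ := hμ.exists_hasEigenvector
  -- v is a nonzero vector with W1 v = 0 and T11 v = μ v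
  have hvne : (v : Fin n → ℂ) ≠ 0 := fun h => hv.2 (Subtype.ext h)
  have hW1v : W1 *ᵥ (v : Fin n → ℂ) = 0 := v.2
  have hT11v : T11 *ᵥ (v : Fin n → ℂ) = μ • (v : Fin n → ℂ) := by
    have h1 : ((f v : S) : Fin n → ℂ) = μ • (v : Fin n → ℂ) := by
      rw [hv.apply_eq_smul]; rfl
    have h2 : ((f v : S) : Fin n → ℂ) = T11 *ᵥ (v : Fin n → ℂ) := rfl
    rw [← h2, h1]
  have hGv : G *ᵥ (W2 *ᵥ (v : Fin n → ℂ)) = 0 := (hkey _ hW1v).1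
  set y := W2 *ᵥ (v : Fin n → ℂ) with hy
  -- Second block equation: Fᴴ y = -μ y
  have hFy : Fᴴ *ᵥ y = (-μ) • y := by
    have := congrArg (fun M => M *ᵥ (v : Fin n → ℂ)) heq2
    simp only [Matrix.add_mulVec, Matrix.neg_mulVec, ← Matrix.mulVec_mulVec] at this
    rw [hW1v, hT11v] at this
    simp only [Matrix.mulVec_zero, neg_zero, zero_add] at this
    rw [Matrix.mulVec_smul, ← hy] at this
    rw [neg_smul, ← this, neg_neg]
  -- y is killed by the conjugate transpose of the controllability matrix at s = -conj μ
  set s : ℂ := -(starRingEnd ℂ) μ with hs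
  set M : Matrix (Fin n) (Fin n ⊕ Fin n) ℂ :=
    Matrix.fromCols (s • (1 : Matrix (Fin n) (Fin n) ℂ) - F) G with hM
  have hMrank : Mᴴ.rank = n := by rw [Matrix.rank_conjTranspose]; exact hctrb s
  have hMHy : Mᴴ *ᵥ y = 0 := by
    rw [hM, Matrix.conjTranspose_fromCols_eq_fromRows_conjTranspose,
      Matrix.fromRows_mulVec]
    have hA : ((s • (1 : Matrix (Fin n) (Fin n) ℂ) - F)ᴴ) *ᵥ y = 0 := by
      rw [Matrix.conjTranspose_sub, Matrix.conjTranspose_smul, Matrix.conjTranspose_one,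
        Matrix.sub_mulVec, Matrix.smul_mulVec, Matrix.one_mulVec, hFy, hs]
      simp
    have hGH : Gᴴ *ᵥ y = 0 := by rw [hG.isHermitian.eq]; exact hGv
    rw [hA, hGH]
    ext (i | i) <;> simp
  have hy0 : y = 0 := aux_full_col_rank Mᴴ hMrank y hMHy
  -- But then v = (W1ᴴW1 + W2ᴴW2) v = 0, contradiction
  apply hvne
  have : (1 : Matrix (Fin n) (Fin n) ℂ) *ᵥ (v : Fin n → ℂ) = 0 := by
    rw [← horth', Matrix.add_mulVec, ← Matrix.mulVec_mulVec, ← Matrix.mulVec_mulVec,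
      hW1v, ← hy, hy0]
    simp
  simpa using this
end

section
/- Suppose the Hamiltonian matrix H = [[F, G],[−K, −Fᴴ]] satisfies H·[W1; W2] = [W1; W2]·T11 with [W1; W2] of full column rank n and W1ᴴW2 = W2ᴴW1. If the pair (F, K) is observable, then W2 is invertible. -/
open Matrix
open scoped ComplexOrder

lemma aux_inj {m : Type*} [Fintype m] {n : ℕ} (M : Matrix m (Fin n) ℂ)
    (h : M.rank = n) {x : Fin n → ℂ} (hx : M *ᵥ x = 0) : x = 0 := by
  have h1 := M.mulVecLin.finrank_range_add_finrank_ker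
  rw [Module.finrank_fin_fun] at h1
  have h2 : Module.finrank ℂ (LinearMap.ker M.mulVecLin) = 0 := by
    have : M.rank = Module.finrank ℂ (LinearMap.range M.mulVecLin) := rfl
    omega
  have hker : LinearMap.ker M.mulVecLin = ⊥ := Submodule.finrank_eq_zero.mp h2
  have : x ∈ LinearMap.ker M.mulVecLin := by simpa [Matrix.mulVecLin_apply] using hx
  simpa [hker] using this

theorem stmt4 {n : ℕ}
    (F G K : Matrix (Fin n) (Fin n) ℂ)
    (hG : G.PosSemidef) (hK : K.PosSemidef)
    (W1 W2 T11 : Matrix (Fin n) (Fin n) ℂ)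
    (H : Matrix (Fin n ⊕ Fin n) (Fin n ⊕ Fin n) ℂ)
    (hH : H = Matrix.fromBlocks F G (-K) (-Fᴴ))
    (hinv : H * Matrix.fromRows W1 W2 = Matrix.fromRows W1 W2 * T11)
    (hrank : (Matrix.fromRows W1 W2).rank = n)
    (hlag : W1ᴴ * W2 = W2ᴴ * W1)
    (hobs : ∀ s : ℂ,
      (Matrix.fromRows (s • (1 : Matrix (Fin n) (Fin n) ℂ) - F) K).rank = n) :
    IsUnit W2 := by
  subst hH
  -- the two block equations, applied to any vector
  have key : ∀ x : Fin n → ℂ, W2 *ᵥ x = 0 →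
      K *ᵥ (W1 *ᵥ x) = 0 ∧ W2 *ᵥ (T11 *ᵥ x) = 0 ∧
        F *ᵥ (W1 *ᵥ x) = W1 *ᵥ (T11 *ᵥ x) := by
    intro x hx
    have hx' : (fromBlocks F G (-K) (-Fᴴ)) *ᵥ ((fromRows W1 W2) *ᵥ x)
        = (fromRows W1 W2) *ᵥ (T11 *ᵥ x) := by
      rw [mulVec_mulVec, mulVec_mulVec, hinv]
    rw [fromRows_mulVec, fromRows_mulVec, fromBlocks_mulVec] at hx'
    have e1 : F *ᵥ (W1 *ᵥ x) + G *ᵥ (W2 *ᵥ x) = W1 *ᵥ (T11 *ᵥ x) := by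
      funext i; simpa using congrFun hx' (Sum.inl i)
    have e2 : (-K) *ᵥ (W1 *ᵥ x) + (-Fᴴ) *ᵥ (W2 *ᵥ x) = W2 *ᵥ (T11 *ᵥ x) := by
      funext i; simpa using congrFun hx' (Sum.inr i)
    rw [hx, mulVec_zero, add_zero] at e1 e2
    -- show K *ᵥ (W1 *ᵥ x) = 0 via positive semidefiniteness
    have hr : star (W1 *ᵥ x) ⬝ᵥ (W2 *ᵥ (T11 *ᵥ x)) = 0 := by
      rw [star_mulVec, dotProduct_mulVec, vecMul_vecMul, hlag, ← vecMul_vecMul,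
        ← star_mulVec, hx]
      simp
    have hdp : star (W1 *ᵥ x) ⬝ᵥ K *ᵥ (W1 *ᵥ x) = 0 := by
      have h3 : star (W1 *ᵥ x) ⬝ᵥ ((-K) *ᵥ (W1 *ᵥ x)) = 0 := by rw [e2]; exact hr
      rwa [neg_mulVec, dotProduct_neg, neg_eq_zero] at h3
    have hK0 : K *ᵥ (W1 *ᵥ x) = 0 :=
      (hK.dotProduct_mulVec_zero_iff _).mp hdp
    refine ⟨hK0, ?_, by simpa using e1⟩
    rw [← e2, neg_mulVec, hK0]
    simp
  -- suppose W2 not invertible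
  by_contra hW2
  have hdet : W2.det = 0 := by
    by_contra hdet
    exact hW2 ((Matrix.isUnit_iff_isUnit_det W2).mpr (isUnit_iff_ne_zero.mpr hdet))
  obtain ⟨v, hv, hv0⟩ := (Matrix.exists_mulVec_eq_zero_iff).mpr hdet
  -- the kernel of W2 as a submodule
  set V : Submodule ℂ (Fin n → ℂ) := LinearMap.ker W2.mulVecLin with hV
  have hVmem : ∀ y, y ∈ V ↔ W2 *ᵥ y = 0 := fun y => by
    simp [hV, LinearMap.mem_ker, Matrix.mulVecLin_apply]
  have hinvV : ∀ y ∈ V, T11.mulVecLin y ∈ V := by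
    intro y hy
    rw [hVmem] at hy ⊢
    simpa [Matrix.mulVecLin_apply] using (key y hy).2.1
  have : Nontrivial V := by
    refine Submodule.nontrivial_iff_ne_bot.mpr ?_
    intro hbot
    exact hv (by simpa [hbot] using (hVmem v).mpr hv0)
  obtain ⟨s, hs⟩ := Module.End.exists_eigenvalue (T11.mulVecLin.restrict hinvV)
  obtain ⟨⟨y, hyV⟩, hy⟩ := hs.exists_hasEigenvector
  have hy0 : y ≠ 0 := fun h => hy.2 (by simp [h])
  have hTy : T11 *ᵥ y = s • y := by
    have h2 := congrArg Subtype.val hy.apply_eq_smul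
    simpa [Matrix.mulVecLin_apply, LinearMap.restrict_apply] using h2
  have hW2y : W2 *ᵥ y = 0 := (hVmem y).mp hyV
  obtain ⟨hKy, _, hFy⟩ := key y hW2y
  have hFy' : F *ᵥ (W1 *ᵥ y) = s • (W1 *ᵥ y) := by
    rw [hFy, hTy, mulVec_smul]
  have hobs' : (fromRows (s • (1 : Matrix (Fin n) (Fin n) ℂ) - F) K) *ᵥ (W1 *ᵥ y) = 0 := by
    rw [fromRows_mulVec, sub_mulVec, smul_mulVec, one_mulVec, hFy', hKy]
    simp
  have hW1y : W1 *ᵥ y = 0 := aux_inj _ (hobs s) hobs'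
  have : (fromRows W1 W2) *ᵥ y = 0 := by
    rw [fromRows_mulVec, hW1y, hW2y]; simp
  exact hy0 (aux_inj _ hrank this)
end

section
/- Let X = Xᴴ > 0 solve the algebraic Riccati equation FᴴX + XF + XGX + K = 0 with G ≥ 0, K ≥ 0, and suppose (F, K) is observable. If λ is any eigenvalue of F with eigenvector x ≠ 0, then Re(λ) < 0, i.e. F is asymptotically stable. -/
open Matrix
open scoped ComplexOrder

theorem stmt5 {n : ℕ}
    (F G K X : Matrix (Fin n) (Fin n) ℂ)
    (hG : G.PosSemidef) (hK : K.PosSemidef)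
    (hX : X.PosDef)
    (hare : Fᴴ * X + X * F + X * G * X + K = 0)
    (hobs : ∀ (lam : ℂ) (x : Fin n → ℂ), x ≠ 0 → F.mulVec x = lam • x → K.mulVec x ≠ 0) :
    ∀ (lam : ℂ) (x : Fin n → ℂ), x ≠ 0 → F.mulVec x = lam • x → lam.re < 0 := by
  intro lam x hx heig
  -- the three quadratic forms
  set a : ℂ := star x ⬝ᵥ X *ᵥ x with ha
  set b : ℂ := star (X *ᵥ x) ⬝ᵥ G *ᵥ (X *ᵥ x) with hb
  set c : ℂ := star x ⬝ᵥ K *ᵥ x with hc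
  have haPos : 0 < a := hX.dotProduct_mulVec_pos hx
  have hbNonneg : 0 ≤ b := hG.dotProduct_mulVec_nonneg _
  have hcPos : 0 < c := by
    rcases lt_or_eq_of_le (hK.dotProduct_mulVec_nonneg x) with h | h
    · exact h
    · exact absurd ((hK.dotProduct_mulVec_zero_iff x).mp h.symm)
        (hobs lam x hx heig)
  -- evaluate the ARE quadratic form
  have key : (starRingEnd ℂ lam + lam) * a + b + c = 0 := by
    have h0 : star x ⬝ᵥ (Fᴴ * X + X * F + X * G * X + K) *ᵥ x = 0 := by
      rw [hare]; simp
    have h1 : star x ⬝ᵥ (Fᴴ * X) *ᵥ x = starRingEnd ℂ lam * a := by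
      rw [← mulVec_mulVec, dotProduct_mulVec, vecMul_conjTranspose, star_star, heig]
      simp only [star_smul, smul_dotProduct, smul_eq_mul, starRingEnd_apply, ha]
    have h2 : star x ⬝ᵥ (X * F) *ᵥ x = lam * a := by
      rw [← mulVec_mulVec, heig]
      simp [ha, mulVec_smul, dotProduct_smul]
    have h3 : star x ⬝ᵥ (X * G * X) *ᵥ x = b := by
      have : X * G * X = Xᴴ * G * X := by rw [hX.1.eq]
      rw [this, hb, Matrix.mul_assoc, ← mulVec_mulVec, ← mulVec_mulVec,
        dotProduct_mulVec, vecMul_conjTranspose, star_star]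
    rw [add_mulVec, add_mulVec, add_mulVec, dotProduct_add, dotProduct_add,
      dotProduct_add, h1, h2, h3] at h0
    linear_combination h0
  have haim : a.im = 0 := by
    have := (Complex.lt_def.mp haPos).2
    simpa using this.symm
  have hre : (2 * lam.re) * a.re + b.re + c.re = 0 := by
    have h := congrArg Complex.re key
    simp [Complex.add_re, Complex.mul_re, haim] at h
    linarith
  have haRe : 0 < a.re := by
    rw [Complex.lt_def] at haPos; exact haPos.1
  have hbRe : 0 ≤ b.re := by
    rw [Complex.le_def] at hbNonneg; exact hbNonneg.1
  have hcRe : 0 < c.re := by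
    rw [Complex.lt_def] at hcPos; exact hcPos.1
  by_contra h
  push_neg at h
  nlinarith [mul_nonneg h haRe.le]
end

section
/- Let H = [[F, G],[−K, −Fᴴ]] be a Hamiltonian matrix and suppose W = [W1; W2] satisfies HW = W T11, WᴴW = I, Wᴴ J W = 0. Then with Q = [[W1, −W2],[W2, W1]], the matrix Qᴴ H Q is block upper triangular of the form [[T11, T12],[0, −T11ᴴ]] for some T12, i.e. H admits a Hamiltonian Schur form. -/
open Matrix
open scoped ComplexOrder

theorem stmt10 {n : ℕ}
    (F G K : Matrix (Fin n) (Fin n) ℂ)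
    (W1 W2 T11 : Matrix (Fin n) (Fin n) ℂ)
    (H J : Matrix (Fin n ⊕ Fin n) (Fin n ⊕ Fin n) ℂ)
    (hH : H = Matrix.fromBlocks F G (-K) (-Fᴴ))
    (hJ : J = Matrix.fromBlocks 0 1 (-1) 0)
    (hHam : (J * H)ᴴ = J * H)
    (hinv : H * Matrix.fromRows W1 W2 = Matrix.fromRows W1 W2 * T11)
    (horth : (Matrix.fromRows W1 W2)ᴴ * Matrix.fromRows W1 W2 = 1)
    (hlag : (Matrix.fromRows W1 W2)ᴴ * J * Matrix.fromRows W1 W2 = 0) :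
    ∃ T12 : Matrix (Fin n) (Fin n) ℂ,
      (Matrix.fromBlocks W1 (-W2) W2 W1)ᴴ * H * Matrix.fromBlocks W1 (-W2) W2 W1 =
        Matrix.fromBlocks T11 T12 0 (-T11ᴴ) := by
  set W : Matrix (Fin n ⊕ Fin n) (Fin n) ℂ := Matrix.fromRows W1 W2 with hW
  set X : Matrix (Fin n ⊕ Fin n) (Fin n) ℂ := Matrix.fromRows (-W2) W1 with hXdef
  -- basic facts about J
  have hJc : Jᴴ = -J := by
    subst hJ
    rw [Matrix.fromBlocks_conjTranspose, Matrix.fromBlocks_neg]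
    simp
  have hJJ : J * J = -1 := by
    subst hJ
    rw [Matrix.fromBlocks_multiply, ← Matrix.fromBlocks_one, Matrix.fromBlocks_neg]
    simp
  -- X = (-J) * W
  have hX : X = (-J) * W := by
    subst hJ
    rw [hW, hXdef]
    have : (-(Matrix.fromBlocks 0 1 (-1) 0 : Matrix (Fin n ⊕ Fin n) (Fin n ⊕ Fin n) ℂ)) =
        Matrix.fromBlocks 0 (-1) 1 0 := by
      ext (i | i) (j | j) <;> simp [Matrix.fromBlocks]
    rw [this, Matrix.fromBlocks_mul_fromRows]
    simp
  -- Hᴴ = J * H * J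
  have hHH : Hᴴ = J * H * J := by
    have h1 : Hᴴ * (-J) = J * H := by rw [← hJc, ← Matrix.conjTranspose_mul, hHam]
    have h2 : Hᴴ * (-J) * J = J * H * J := by rw [h1]
    rw [mul_assoc, neg_mul, hJJ, neg_neg, mul_one] at h2
    exact h2
  -- the (1,1) block
  have hT : Wᴴ * H * W = T11 := by
    rw [Matrix.mul_assoc, hinv, ← Matrix.mul_assoc, horth, one_mul]
  -- decompose Q
  have hQ : Matrix.fromBlocks W1 (-W2) W2 W1 = Matrix.fromCols W X := by
    rw [hW, hXdef, Matrix.fromCols_fromRows_eq_fromBlocks]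
  refine ⟨Wᴴ * H * X, ?_⟩
  rw [hQ, Matrix.conjTranspose_fromCols_eq_fromRows_conjTranspose,
    Matrix.fromRows_mul, Matrix.fromRows_mul_fromCols]
  have hXc : Xᴴ = Wᴴ * J := by
    rw [hX, Matrix.conjTranspose_mul, Matrix.conjTranspose_neg, hJc, neg_neg]
  have h21 : Xᴴ * H * W = 0 := by
    rw [hXc, Matrix.mul_assoc (Wᴴ * J) H W, hinv, ← Matrix.mul_assoc, hlag, zero_mul]
  have h22 : Xᴴ * H * X = -T11ᴴ := by
    rw [hXc, hX]
    have : Wᴴ * J * H * (-J * W) = -(Wᴴ * (J * H * J) * W) := by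
      simp only [Matrix.mul_assoc, neg_mul, Matrix.mul_neg, Matrix.neg_mul]
    rw [this, ← hHH]
    have : Wᴴ * Hᴴ * W = (Wᴴ * H * W)ᴴ := by
      rw [Matrix.conjTranspose_mul, Matrix.conjTranspose_mul, Matrix.conjTranspose_conjTranspose,
        Matrix.mul_assoc]
    rw [this, hT]
  rw [hT, h21, h22]
end

section
/- If X = Xᴴ solves the perturbed Riccati equation (F+ΔF)ᴴX + X(F+ΔF) + X(G+ΔG)X + (K+ΔK) = 0, where Δ = [[ΔG, ΔF],[ΔFᴴ, ΔK]] is Hermitian positive semidefinite, then X satisfies the Riccati inequality FᴴX + XF + XGX + K ≤ 0 (i.e. this matrix is negative semidefinite). -/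
open Matrix
open scoped ComplexOrder

theorem stmt11 {n : ℕ}
    (F G K DF DG DK X : Matrix (Fin n) (Fin n) ℂ)
    (hX : X.IsHermitian)
    (hDelta : (Matrix.fromBlocks DG DF DFᴴ DK).PosSemidef)
    (heq : (F + DF)ᴴ * X + X * (F + DF) + X * (G + DG) * X + (K + DK) = 0) :
    (-(Fᴴ * X + X * F + X * G * X + K)).PosSemidef := by
  have hps := hDelta.mul_mul_conjTranspose_same (fromCols X 1)
  rw [conjTranspose_fromCols_eq_fromRows_conjTranspose, fromCols_mul_fromBlocks,
    fromCols_mul_fromRows] at hps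
  have hform : (X * DG + 1 * DFᴴ) * Xᴴ + (X * DF + 1 * DK) * 1ᴴ
      = X * DG * X + X * DF + DFᴴ * X + DK := by
    rw [hX.eq]
    simp [add_mul, mul_add]
    abel
  rw [hform] at hps
  have key : -(Fᴴ * X + X * F + X * G * X + K) = X * DG * X + X * DF + DFᴴ * X + DK := by
    have h := heq
    simp only [conjTranspose_add, add_mul, mul_add] at h
    rw [neg_eq_iff_add_eq_zero]
    rw [← h]
    abel
  rw [key]
  exact hps
end

section
/- Let A be Hermitian with a 2×2 block partition A = [[A11, A21ᴴ],[A21, A22]]. If A ≥ 0 and there exists a nonzero vector x with A11 x = 0 and A21 x ≠ 0, then one arrives at a contradiction; i.e., A ≥ 0 and A11 x = 0 imply A21 x = 0. Consequently, if F = [[F11, 0],[0, F22]] is block diagonal, Δ is Hermitian positive semidefinite with blocks Δ11 (partitioned again into blocks matching F), and (F, Δ11) is observable, then (F11, Δ11^{(1,1)}) is observable, where Δ11^{(1,1)} is the leading principal block of Δ11. -/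
open Matrix
open scoped ComplexOrder

lemma aux_ker {n1 n2 : ℕ}
    (A11 : Matrix (Fin n1) (Fin n1) ℂ) (A21 : Matrix (Fin n2) (Fin n1) ℂ)
    (A22 : Matrix (Fin n2) (Fin n2) ℂ)
    (hA : (Matrix.fromBlocks A11 A21ᴴ A21 A22).PosSemidef)
    (x : Fin n1 → ℂ) (hx : A11.mulVec x = 0) : A21.mulVec x = 0 := by
  set y : Fin n1 ⊕ Fin n2 → ℂ := Sum.elim x 0 with hy
  have hmv : (Matrix.fromBlocks A11 A21ᴴ A21 A22).mulVec y =
      Sum.elim (A11 *ᵥ x + A21ᴴ *ᵥ 0) (A21 *ᵥ x + A22 *ᵥ 0) := by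
    rw [hy, Matrix.fromBlocks_mulVec]
    simp
  have hdot : star y ⬝ᵥ (Matrix.fromBlocks A11 A21ᴴ A21 A22) *ᵥ y = 0 := by
    rw [hmv]
    simp [hy, hx, dotProduct, Fintype.sum_sum_type]
  have h0 := (hA.dotProduct_mulVec_zero_iff y).mp hdot
  rw [hmv] at h0
  have := congrFun h0
  funext i
  have h2 := this (Sum.inr i)
  simpa [hx, hy] using h2

theorem stmt15 {n1 n2 : ℕ}
    (A11 : Matrix (Fin n1) (Fin n1) ℂ) (A21 : Matrix (Fin n2) (Fin n1) ℂ)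
    (A22 : Matrix (Fin n2) (Fin n2) ℂ)
    (hA : (Matrix.fromBlocks A11 A21ᴴ A21 A22).PosSemidef)
    (F11 : Matrix (Fin n1) (Fin n1) ℂ) (F22 : Matrix (Fin n2) (Fin n2) ℂ)
    (D11 : Matrix (Fin n1) (Fin n1) ℂ) (D21 : Matrix (Fin n2) (Fin n1) ℂ)
    (D22 : Matrix (Fin n2) (Fin n2) ℂ)
    (hD : (Matrix.fromBlocks D11 D21ᴴ D21 D22).PosSemidef)
    (hobs : ∀ (lam : ℂ) (x : Fin n1 ⊕ Fin n2 → ℂ), x ≠ 0 →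
      (Matrix.fromBlocks F11 0 0 F22).mulVec x = lam • x →
      (Matrix.fromBlocks D11 D21ᴴ D21 D22).mulVec x ≠ 0) :
    (∀ x : Fin n1 → ℂ, A11.mulVec x = 0 → A21.mulVec x = 0) ∧
      (∀ (lam : ℂ) (x : Fin n1 → ℂ), x ≠ 0 →
        F11.mulVec x = lam • x → D11.mulVec x ≠ 0) := by
  constructor
  · exact fun x hx => aux_ker A11 A21 A22 hA x hx
  · intro lam x hx hF hD11
    set y : Fin n1 ⊕ Fin n2 → ℂ := Sum.elim x 0 with hy
    have hyne : y ≠ 0 := by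
      intro h
      apply hx
      funext i
      exact congrFun h (Sum.inl i)
    have hFy : (Matrix.fromBlocks F11 0 0 F22).mulVec y = lam • y := by
      rw [hy, Matrix.fromBlocks_mulVec]
      funext i
      cases i with
      | inl i => simp [hF, Pi.smul_apply]
      | inr i => simp
    have hD21 : D21.mulVec x = 0 := aux_ker D11 D21 D22 hD x hD11
    have hDy : (Matrix.fromBlocks D11 D21ᴴ D21 D22).mulVec y = 0 := by
      rw [hy, Matrix.fromBlocks_mulVec]
      funext i
      cases i with
      | inl i => simp [hD11]
      | inr i => simp [hD21]
    exact hobs lam y hyne hFy hDy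
end

section
/- Let X be a Hermitian solution of FᴴX + XF + XGX + K = 0, with F, G, K partitioned as F = [[F11, 0],[F21, F22]], G = [[G11, G21ᴴ],[G21, G22]], K = [[K11, 0],[0, 0]]. Write X = [[I, Z],[0, I]]·diag(X11, X22)·[[I, 0],[Zᴴ, I]] with X11, X22 invertible. Then: (1) X11 solves F11ᴴX11 + X11F11 + X11G11X11 + K11 = 0; (2) Z solves the Sylvester equation (F11 + G11X11)ᴴZ − Z F22ᴴ + F21ᴴ + X11G21ᴴ = 0; and (3) X22 solves F22ᴴX22 + X22F22 + X22(G22 + ZᴴG21ᴴ + G21Z + ZᴴG11Z)X22 = 0. -/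
open Matrix
open scoped ComplexOrder

set_option maxHeartbeats 1000000 in
theorem stmt18 {n1 n2 : ℕ}
    (F11 G11 K11 X11 : Matrix (Fin n1) (Fin n1) ℂ)
    (F21 G21 : Matrix (Fin n2) (Fin n1) ℂ)
    (F22 G22 X22 : Matrix (Fin n2) (Fin n2) ℂ)
    (Z : Matrix (Fin n1) (Fin n2) ℂ)
    (hG : (Matrix.fromBlocks G11 G21ᴴ G21 G22).IsHermitian)
    (hK : (Matrix.fromBlocks K11 0 0 0 : Matrix (Fin n1 ⊕ Fin n2) (Fin n1 ⊕ Fin n2) ℂ).IsHermitian)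
    (hX11 : X11.PosDef) (hX22 : X22.PosDef)
    (X : Matrix (Fin n1 ⊕ Fin n2) (Fin n1 ⊕ Fin n2) ℂ)
    (hXdef : X = Matrix.fromBlocks 1 Z 0 1 * Matrix.fromBlocks X11 0 0 X22 *
      Matrix.fromBlocks 1 0 Zᴴ 1)
    (hare : (Matrix.fromBlocks F11 0 F21 F22)ᴴ * X + X * Matrix.fromBlocks F11 0 F21 F22 +
      X * Matrix.fromBlocks G11 G21ᴴ G21 G22 * X + Matrix.fromBlocks K11 0 0 0 = 0) :
    F11ᴴ * X11 + X11 * F11 + X11 * G11 * X11 + K11 = 0 ∧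
      (F11 + G11 * X11)ᴴ * Z - Z * F22ᴴ + F21ᴴ + X11 * G21ᴴ = 0 ∧
      F22ᴴ * X22 + X22 * F22 +
        X22 * (G22 + Zᴴ * G21ᴴ + G21 * Z + Zᴴ * G11 * Z) * X22 = 0 := by
  have hG11 : G11ᴴ = G11 := by
    have h := hG
    rw [Matrix.IsHermitian, Matrix.fromBlocks_conjTranspose, Matrix.fromBlocks_inj] at h
    exact h.1
  have hX11h : X11ᴴ = X11 := hX11.isHermitian
  have hX : X = Matrix.fromBlocks (X11 + Z * X22 * Zᴴ) (Z * X22) (X22 * Zᴴ) X22 := by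
    rw [hXdef]; simp [Matrix.fromBlocks_multiply, Matrix.mul_assoc]
  have key : Matrix.fromBlocks 1 (-Z) 0 1 *
      ((Matrix.fromBlocks F11 0 F21 F22)ᴴ * X + X * Matrix.fromBlocks F11 0 F21 F22 +
        X * Matrix.fromBlocks G11 G21ᴴ G21 G22 * X + Matrix.fromBlocks K11 0 0 0) *
      Matrix.fromBlocks 1 0 (-Zᴴ) 1
      = Matrix.fromBlocks (F11ᴴ * X11 + X11 * F11 + X11 * G11 * X11 + K11)
          ((F11ᴴ * Z + F21ᴴ - Z * F22ᴴ + X11 * G11 * Z + X11 * G21ᴴ) * X22)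
          (X22 * (Zᴴ * F11 + F21 - F22 * Zᴴ) + X22 * (Zᴴ * G11 + G21) * X11)
          (F22ᴴ * X22 + X22 * F22 +
            X22 * (G22 + Zᴴ * G21ᴴ + G21 * Z + Zᴴ * G11 * Z) * X22) := by
    rw [hX]
    simp only [Matrix.fromBlocks_conjTranspose, Matrix.fromBlocks_multiply,
      Matrix.fromBlocks_add, Matrix.conjTranspose_zero, Matrix.mul_zero, Matrix.zero_mul,
      Matrix.mul_one, Matrix.one_mul, add_zero, zero_add]
    rw [Matrix.fromBlocks_inj]
    refine ⟨?_, ?_, ?_, ?_⟩ <;>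
      · simp only [Matrix.mul_add, Matrix.add_mul, Matrix.sub_mul, Matrix.mul_sub,
          sub_eq_add_neg, Matrix.neg_mul, Matrix.mul_neg, Matrix.mul_assoc]
        abel
  rw [hare, Matrix.mul_zero, Matrix.zero_mul] at key
  have h0 := (Matrix.fromBlocks_inj).1 (key.symm.trans (Matrix.fromBlocks_zero).symm)
  obtain ⟨h11, h12, -, h22⟩ := h0
  refine ⟨h11, ?_, h22⟩
  have hdet : IsUnit X22.det := (Matrix.isUnit_iff_isUnit_det _).1 hX22.isUnit
  have hM : F11ᴴ * Z + F21ᴴ - Z * F22ᴴ + X11 * G11 * Z + X11 * G21ᴴ = 0 := by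
    calc F11ᴴ * Z + F21ᴴ - Z * F22ᴴ + X11 * G11 * Z + X11 * G21ᴴ
        = (F11ᴴ * Z + F21ᴴ - Z * F22ᴴ + X11 * G11 * Z + X11 * G21ᴴ) * X22 * X22⁻¹ := by
          rw [Matrix.mul_assoc _ X22 X22⁻¹, Matrix.mul_nonsing_inv _ hdet, Matrix.mul_one]
      _ = 0 := by rw [h12, Matrix.zero_mul]
  have heq : (F11 + G11 * X11)ᴴ * Z - Z * F22ᴴ + F21ᴴ + X11 * G21ᴴ
      = F11ᴴ * Z + F21ᴴ - Z * F22ᴴ + X11 * G11 * Z + X11 * G21ᴴ := by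
    rw [Matrix.conjTranspose_add, Matrix.conjTranspose_mul, hG11, hX11h, Matrix.add_mul]
    abel
  rw [heq, hM]
end
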